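/- For every n ∈ ℕ, Π_{k ∈ Reg_n} Γ(k/n) = (2π)^{(ρ(n)−1)/2} / √(κ(n)), where Γ is the Gamma function and κ(n) = Π_{p | n} p is the largest squarefree divisor of n. -/

import Mathlib

open Finset Real
open scoped Classical

/-- `k` is regular (mod `n`): there is an integer `x` with `k² x ≡ k (mod n)`. -/
def IsRegularMod (k n : ℕ) : Prop := ∃ x : ℤ, (n : ℤ) ∣ (k : ℤ) ^ 2 * x - (k : ℤ)

/-- `Reg_n`, the set of `k ∈ {1,…,n}` that are regular (mod `n`). -/
noncomputable def Reg (n : ℕ) : Finset ℕ :=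
  (Finset.Icc 1 n).filter fun k => IsRegularMod k n

/-- `κ(n) = ∏_{p ∣ n} p`, the largest squarefree divisor of `n`. -/
def kappa (n : ℕ) : ℕ := ∏ p ∈ n.primeFactors, p

section Aux

lemma lin_cong (a b n : ℤ) : (∃ x : ℤ, n ∣ a * x - b) ↔ (Int.gcd a n : ℤ) ∣ b := by
  constructor
  · rintro ⟨x, c, hc⟩
    have hb : b = a * x - n * c := by linarith
    rw [hb]
    exact dvd_sub (Dvd.dvd.mul_right (Int.gcd_dvd_left a n) x) (Dvd.dvd.mul_right (Int.gcd_dvd_right a n) c)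
  · rintro ⟨t, ht⟩
    refine ⟨Int.gcdA a n * t, -(Int.gcdB a n * t), ?_⟩
    have h := Int.gcd_eq_gcd_ab a n
    rw [ht, h]; ring

lemma gcd_sq (k n : ℕ) (hn : 0 < n) :
    Nat.gcd (k^2) n = Nat.gcd k n * Nat.gcd (Nat.gcd k n) (n / Nat.gcd k n) := by
  have hd0 : 0 < Nat.gcd k n := Nat.gcd_pos_of_pos_right k hn
  obtain ⟨k', m, hco, hk, hm⟩ := Nat.exists_coprime k n
  set d := Nat.gcd k n with hd
  have hm' : n / d = m := by rw [hm, Nat.mul_div_cancel m hd0]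
  rw [hm']
  calc Nat.gcd (k^2) n = Nat.gcd (d * (k'^2 * d)) (d * m) := by
        rw [hk, hm]; ring_nf
      _ = d * Nat.gcd (k'^2 * d) m := Nat.gcd_mul_left d _ m
      _ = d * Nat.gcd d m := by rw [Nat.Coprime.gcd_mul_left_cancel d (hco.pow_left 2)]

lemma regular_iff {k n : ℕ} (hn : 0 < n) :
    IsRegularMod k n ↔ Nat.Coprime (Nat.gcd k n) (n / Nat.gcd k n) := by
  have hd0 : 0 < Nat.gcd k n := Nat.gcd_pos_of_pos_right k hn
  rw [IsRegularMod, lin_cong]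
  have h1 : Int.gcd ((k:ℤ)^2) (n:ℤ) = Nat.gcd (k^2) n := by
    rw [show ((k:ℤ)^2) = ((k^2 : ℕ) : ℤ) by push_cast; ring, Int.gcd_natCast_natCast]
  rw [h1, Int.natCast_dvd_natCast, gcd_sq k n hn]
  constructor
  · intro h
    have h2 : Nat.gcd (Nat.gcd k n) (n / Nat.gcd k n) ∣ k / Nat.gcd k n := by
      have := (Nat.mul_dvd_mul_iff_left hd0).mp
        (by rwa [Nat.mul_div_cancel' (Nat.gcd_dvd_left k n)] :
          Nat.gcd k n * Nat.gcd (Nat.gcd k n) (n / Nat.gcd k n) ∣ Nat.gcd k n * (k / Nat.gcd k n))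
      exact this
    have h3 : Nat.gcd (Nat.gcd k n) (n / Nat.gcd k n) ∣
        Nat.gcd (k / Nat.gcd k n) (n / Nat.gcd k n) :=
      Nat.dvd_gcd (h2) (Nat.gcd_dvd_right _ _)
    have h4 : Nat.Coprime (k / Nat.gcd k n) (n / Nat.gcd k n) :=
      Nat.coprime_div_gcd_div_gcd hd0
    exact Nat.eq_one_of_dvd_one (h4 ▸ h3)
  · intro h
    rw [h, mul_one]
    exact Nat.gcd_dvd_left k n

lemma abs_one_sub_exp (θ : ℝ) (h0 : 0 ≤ θ) (h1 : θ ≤ 2 * π) :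
    ‖1 - Complex.exp (θ * Complex.I)‖ = 2 * Real.sin (θ / 2) := by
  have hsq : Complex.normSq (1 - Complex.exp (θ * Complex.I)) = 2 - 2 * Real.cos θ := by
    rw [Complex.exp_mul_I]
    simp only [Complex.normSq_apply, Complex.sub_re, Complex.sub_im, Complex.add_re,
      Complex.add_im, Complex.mul_re, Complex.mul_im, Complex.I_re, Complex.I_im,
      Complex.one_re, Complex.one_im, Complex.cos_ofReal_re, Complex.cos_ofReal_im,
      Complex.sin_ofReal_re, Complex.sin_ofReal_im]
    nlinarith [Real.sin_sq_add_cos_sq θ]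
  have hs : Real.sin (θ/2) ≥ 0 := Real.sin_nonneg_of_nonneg_of_le_pi (by linarith) (by linarith)
  have h2 : 2 - 2 * Real.cos θ = (2 * Real.sin (θ/2))^2 := by
    have h3 := Real.sin_sq_eq_half_sub (θ/2)
    have h4 : 2 * (θ/2) = θ := by ring
    rw [h4] at h3
    nlinarith [h3]
  rw [Complex.norm_def, hsq, h2, Real.sqrt_sq (by linarith)]

lemma prod_two_sin (e : ℕ) (he : 1 < e) :
    ∏ j ∈ (Finset.range e).filter (fun j => Nat.Coprime j e), (2 * Real.sin (π * j / e)) =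
    Polynomial.eval 1 (Polynomial.cyclotomic e ℝ) := by
  have he0 : (0:ℕ) < e := by omega
  set ζ : ℂ := Complex.exp (2 * π * Complex.I / e) with hζdef
  have hζ : IsPrimitiveRoot ζ e := Complex.isPrimitiveRoot_exp e he0.ne'
  have himg : primitiveRoots e ℂ =
      Finset.image (fun j => ζ ^ j) ((Finset.range e).filter (fun j => Nat.Coprime j e)) := by
    ext μ
    rw [mem_primitiveRoots he0, Finset.mem_image]
    constructor
    · intro hμ
      haveI : NeZero e := ⟨he0.ne'⟩
      obtain ⟨i, hi, hiμ⟩ := hζ.eq_pow_of_pow_eq_one hμ.pow_eq_one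
      refine ⟨i, Finset.mem_filter.mpr ⟨Finset.mem_range.mpr hi, ?_⟩, hiμ⟩
      exact (hζ.pow_iff_coprime he0 i).mp (hiμ ▸ hμ)
    · rintro ⟨j, hj, rfl⟩
      exact (hζ.pow_iff_coprime he0 j).mpr (Finset.mem_filter.mp hj).2
  have hcyc : ((Polynomial.eval (1:ℝ) (Polynomial.cyclotomic e ℝ) : ℝ) : ℂ) =
      ∏ j ∈ (Finset.range e).filter (fun j => Nat.Coprime j e), (1 - ζ ^ j) := by
    have h1 : ((Polynomial.eval (1:ℝ) (Polynomial.cyclotomic e ℝ) : ℝ) : ℂ) =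
        Polynomial.eval (1:ℂ) (Polynomial.cyclotomic e ℂ) := by
      rw [← Polynomial.map_cyclotomic e (algebraMap ℝ ℂ), Polynomial.eval_map,
        Polynomial.eval₂_at_one]
      rfl
    rw [h1, Polynomial.cyclotomic_eq_prod_X_sub_primitiveRoots hζ, Polynomial.eval_prod]
    simp only [Polynomial.eval_sub, Polynomial.eval_X, Polynomial.eval_C]
    rw [himg, Finset.prod_image]
    intro i hi j hj hij
    exact hζ.pow_inj (Finset.mem_range.mp (Finset.mem_filter.mp hi).1)
      (Finset.mem_range.mp (Finset.mem_filter.mp hj).1) hij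
  have habs : ∀ j ∈ (Finset.range e).filter (fun j => Nat.Coprime j e),
      ‖1 - ζ ^ j‖ = 2 * Real.sin (π * j / e) := by
    intro j hj
    obtain ⟨hjr, hjc⟩ := Finset.mem_filter.mp hj
    rw [Finset.mem_range] at hjr
    have hj0 : 0 < j := by
      rcases Nat.eq_zero_or_pos j with h | h
      · subst h; rw [Nat.coprime_zero_left] at hjc; omega
      · exact h
    have hθ : ζ ^ j = Complex.exp (((2 * π * j / e : ℝ) : ℂ) * Complex.I) := by
      rw [hζdef, ← Complex.exp_nat_mul]
      congr 1
      push_cast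
      field_simp
    rw [hθ, abs_one_sub_exp (2 * π * j / e)]
    · congr 1
      field_simp
    · positivity
    · rw [div_le_iff₀ (by exact_mod_cast he0)]
      have : (j:ℝ) ≤ e := by exact_mod_cast hjr.le
      nlinarith [Real.pi_pos]
  calc ∏ j ∈ (Finset.range e).filter (fun j => Nat.Coprime j e), (2 * Real.sin (π * j / e))
      = ∏ j ∈ (Finset.range e).filter (fun j => Nat.Coprime j e), ‖1 - ζ ^ j‖ :=
        (Finset.prod_congr rfl habs).symm
    _ = ‖∏ j ∈ (Finset.range e).filter (fun j => Nat.Coprime j e), (1 - ζ ^ j)‖ :=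
        (Complex.norm_prod _ _).symm
    _ = ‖((Polynomial.eval (1:ℝ) (Polynomial.cyclotomic e ℝ) : ℝ) : ℂ)‖ := by rw [hcyc]
    _ = |Polynomial.eval (1:ℝ) (Polynomial.cyclotomic e ℝ)| := (Complex.norm_real _).trans (Real.norm_eq_abs _)
    _ = Polynomial.eval (1:ℝ) (Polynomial.cyclotomic e ℝ) :=
        abs_of_nonneg (Polynomial.cyclotomic_nonneg e le_rfl)

lemma outer_prod (n : ℕ) (hn : 0 < n) :
    ∏ e ∈ n.divisors.filter (fun e => 1 < e ∧ Nat.Coprime e (n / e)),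
      Polynomial.eval (1:ℝ) (Polynomial.cyclotomic e ℝ) = (kappa n : ℝ) := by
  set E := n.divisors.filter (fun e => 1 < e ∧ Nat.Coprime e (n / e)) with hE
  rw [← Finset.prod_filter_mul_prod_filter_not E IsPrimePow]
  have h2 : ∏ e ∈ E.filter (fun e => ¬ IsPrimePow e),
      Polynomial.eval (1:ℝ) (Polynomial.cyclotomic e ℝ) = 1 := by
    apply Finset.prod_eq_one
    intro e he
    obtain ⟨heE, hnpp⟩ := Finset.mem_filter.mp he
    obtain ⟨-, he1, -⟩ := Finset.mem_filter.mp heE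
    apply Polynomial.eval_one_cyclotomic_not_prime_pow
    intro p hp k hk
    rcases Nat.eq_zero_or_pos k with h | h
    · subst h; simp at hk; omega
    · exact hnpp ⟨p, k, hp.prime, h, hk⟩
  rw [h2, mul_one]
  have himg : E.filter IsPrimePow =
      Finset.image (fun p => p ^ n.factorization p) n.primeFactors := by
    ext e
    rw [Finset.mem_filter, Finset.mem_image]
    constructor
    · rintro ⟨heE, p, k, hp, hk, rfl⟩
      rw [hE, Finset.mem_filter, Nat.mem_divisors] at heE
      obtain ⟨⟨hdvd, -⟩, he1, hcop⟩ := heE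
      rw [← Nat.prime_iff] at hp
      refine ⟨p, Nat.mem_primeFactors.mpr ⟨hp, dvd_trans (dvd_pow_self p hk.ne') hdvd, hn.ne'⟩, ?_⟩
      have hkle : k ≤ n.factorization p := (Nat.Prime.pow_dvd_iff_le_factorization hp hn.ne').mp hdvd
      rcases eq_or_lt_of_le hkle with h | h
      · rw [h]
      · exfalso
        have hpk1 : p ^ (k + 1) ∣ n := (Nat.Prime.pow_dvd_iff_le_factorization hp hn.ne').mpr h
        have hpd : p ∣ n / p ^ k := by
          rw [Nat.dvd_div_iff_mul_dvd hdvd]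
          rw [← pow_succ]; exact hpk1
        have hdg : p ∣ Nat.gcd (p ^ k) (n / p ^ k) :=
          Nat.dvd_gcd (dvd_pow_self p hk.ne') hpd
        have h1 : p ∣ 1 := hcop ▸ hdg
        have := Nat.le_of_dvd one_pos h1
        have := hp.two_le
        omega
    · rintro ⟨p, hp, rfl⟩
      obtain ⟨hpp, hpdvd, -⟩ := Nat.mem_primeFactors.mp hp
      have hv : 0 < n.factorization p := hpp.factorization_pos_of_dvd hn.ne' hpdvd
      refine ⟨?_, p, n.factorization p, hpp.prime, hv, rfl⟩
      rw [hE, Finset.mem_filter, Nat.mem_divisors]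
      refine ⟨⟨Nat.ordProj_dvd n p, hn.ne'⟩, ?_, ?_⟩
      · exact one_lt_pow₀ hpp.one_lt hv.ne'
      · exact Nat.Coprime.pow_left _ (Nat.coprime_ordCompl hpp hn.ne')
  rw [himg, Finset.prod_image]
  · have : ∀ p ∈ n.primeFactors,
        Polynomial.eval (1:ℝ) (Polynomial.cyclotomic (p ^ n.factorization p) ℝ) = (p : ℝ) := by
      intro p hp
      obtain ⟨hpp, hpdvd, -⟩ := Nat.mem_primeFactors.mp hp
      have hv : 0 < n.factorization p := hpp.factorization_pos_of_dvd hn.ne' hpdvd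
      haveI : Fact p.Prime := ⟨hpp⟩
      obtain ⟨m, hm⟩ : ∃ m, n.factorization p = m + 1 := ⟨n.factorization p - 1, by omega⟩
      rw [hm, Polynomial.eval_one_cyclotomic_prime_pow]
    rw [Finset.prod_congr rfl this, kappa, Nat.cast_prod]
  · intro p hp q hq hpq
    obtain ⟨hpp, hpdvd, -⟩ := Nat.mem_primeFactors.mp hp
    obtain ⟨hqp, hqdvd, -⟩ := Nat.mem_primeFactors.mp hq
    have hvp : 0 < n.factorization p := hpp.factorization_pos_of_dvd hn.ne' hpdvd
    have hpq' : p ^ n.factorization p = q ^ n.factorization q := hpq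
    have : p ∣ q ^ n.factorization q := hpq' ▸ dvd_pow_self p hvp.ne'
    have := hpp.dvd_of_dvd_pow this
    exact ((Nat.prime_dvd_prime_iff_eq hpp hqp).mp this)

lemma sine_bij (n : ℕ) (hn : 0 < n) (f : ℕ → ℝ) (g : ℕ → ℕ → ℝ)
    (hfg : ∀ e j, e ∣ n → 0 < e → j < e → f ((n / e) * j) = g e j) :
    ∏ k ∈ (Finset.Ico 1 n).filter
        (fun k => Nat.Coprime (Nat.gcd k n) (n / Nat.gcd k n)), f k =
    ∏ x ∈ (n.divisors.filter (fun e => 1 < e ∧ Nat.Coprime e (n / e))).sigma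
        (fun e => (Finset.range e).filter (fun j => Nat.Coprime j e)), g x.1 x.2 := by
  apply Finset.prod_bij'
    (i := fun k _ => (⟨n / Nat.gcd k n, k / Nat.gcd k n⟩ : Σ _ : ℕ, ℕ))
    (j := fun x _ => (n / x.1) * x.2)
  · -- hi : i maps into sigma set
    intro k hk
    obtain ⟨hk1, hP⟩ := Finset.mem_filter.mp hk
    rw [Finset.mem_Ico] at hk1
    have hd : Nat.gcd k n ∣ n := Nat.gcd_dvd_right k n
    have hd0 : 0 < Nat.gcd k n := Nat.gcd_pos_of_pos_right k hn
    rw [Finset.mem_sigma, Finset.mem_filter, Nat.mem_divisors, Finset.mem_filter,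
      Finset.mem_range]
    refine ⟨⟨⟨Nat.div_dvd_of_dvd hd, hn.ne'⟩, ?_, ?_⟩, ?_, ?_⟩
    · have hdlt : Nat.gcd k n < n :=
        lt_of_le_of_lt (Nat.le_of_dvd (by omega) (Nat.gcd_dvd_left k n)) hk1.2
      rw [Nat.lt_div_iff_mul_lt' hd]
      omega
    · rw [Nat.div_div_self hd hn.ne']
      exact hP.symm
    · exact Nat.div_lt_div_of_lt_of_dvd hd hk1.2
    · exact Nat.coprime_div_gcd_div_gcd hd0
  · -- hj : j maps into Ico-filter
    rintro ⟨e, j⟩ hx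
    rw [Finset.mem_sigma, Finset.mem_filter, Nat.mem_divisors, Finset.mem_filter,
      Finset.mem_range] at hx
    obtain ⟨⟨⟨hednd, -⟩, he1, hecop⟩, hjr, hjc⟩ := hx
    simp only at hednd he1 hecop hjr hjc ⊢
    have hde : (n / e) * e = n := Nat.div_mul_cancel hednd
    have hne0 : 0 < n / e := Nat.div_pos (Nat.le_of_dvd hn hednd) (by omega)
    have hj0 : 0 < j := by
      rcases Nat.eq_zero_or_pos j with h | h
      · subst h; rw [Nat.coprime_zero_left] at hjc; omega
      · exact h
    have hgcd : Nat.gcd ((n / e) * j) n = n / e := by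
      have h5 : Nat.gcd ((n / e) * j) ((n / e) * e) = (n / e) * Nat.gcd j e :=
        Nat.gcd_mul_left _ j e
      rw [hde] at h5
      rw [h5, hjc, mul_one]
    rw [Finset.mem_filter, Finset.mem_Ico]
    refine ⟨⟨Nat.one_le_iff_ne_zero.mpr (Nat.mul_ne_zero hne0.ne' hj0.ne'), ?_⟩, ?_⟩
    · calc (n / e) * j < (n / e) * e := mul_lt_mul_of_pos_left hjr hne0
        _ = n := hde
    · rw [hgcd, Nat.div_div_self hednd hn.ne']
      exact hecop.symm
  · -- left_inv : j (i k) = k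
    intro k hk
    obtain ⟨hk1, hP⟩ := Finset.mem_filter.mp hk
    have hd : Nat.gcd k n ∣ n := Nat.gcd_dvd_right k n
    simp only
    rw [Nat.div_div_self hd hn.ne', Nat.mul_div_cancel' (Nat.gcd_dvd_left k n)]
  · -- right_inv : i (j x) = x
    rintro ⟨e, j⟩ hx
    rw [Finset.mem_sigma, Finset.mem_filter, Nat.mem_divisors, Finset.mem_filter,
      Finset.mem_range] at hx
    obtain ⟨⟨⟨hednd, -⟩, he1, hecop⟩, hjr, hjc⟩ := hx
    simp only at hednd he1 hecop hjr hjc ⊢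
    have hde : (n / e) * e = n := Nat.div_mul_cancel hednd
    have hne0 : 0 < n / e := Nat.div_pos (Nat.le_of_dvd hn hednd) (by omega)
    have hgcd : Nat.gcd ((n / e) * j) n = n / e := by
      have h5 : Nat.gcd ((n / e) * j) ((n / e) * e) = (n / e) * Nat.gcd j e :=
        Nat.gcd_mul_left _ j e
      rw [hde] at h5
      rw [h5, hjc, mul_one]
    rw [hgcd, Nat.div_div_self hednd hn.ne', Nat.mul_div_cancel_left j hne0]
  · -- values agree
    intro k hk
    obtain ⟨hk1, hP⟩ := Finset.mem_filter.mp hk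
    rw [Finset.mem_Ico] at hk1
    have hd : Nat.gcd k n ∣ n := Nat.gcd_dvd_right k n
    have hd0 : 0 < Nat.gcd k n := Nat.gcd_pos_of_pos_right k hn
    have h1 := hfg (n / Nat.gcd k n) (k / Nat.gcd k n) (Nat.div_dvd_of_dvd hd)
      (Nat.div_pos (Nat.le_of_dvd hn hd) hd0)
      (Nat.div_lt_div_of_lt_of_dvd hd hk1.2)
    rw [Nat.div_div_self hd hn.ne', Nat.mul_div_cancel' (Nat.gcd_dvd_left k n)] at h1
    exact h1.symm ▸ rfl

lemma sine_prod (n : ℕ) (hn : 0 < n) :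
    ∏ k ∈ (Finset.Ico 1 n).filter
        (fun k => Nat.Coprime (Nat.gcd k n) (n / Nat.gcd k n)),
      (2 * Real.sin (π * k / n)) = (kappa n : ℝ) := by
  have h1 := sine_bij n hn (fun k => 2 * Real.sin (π * k / n))
    (fun e j => 2 * Real.sin (π * j / e)) ?_
  · rw [h1, Finset.prod_sigma]
    rw [← outer_prod n hn]
    apply Finset.prod_congr rfl
    intro e he
    obtain ⟨-, he1, -⟩ := Finset.mem_filter.mp he
    exact prod_two_sin e he1
  · intro e j hednd he0 hje
    have hde : (n / e) * e = n := Nat.div_mul_cancel hednd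
    have hne0 : 0 < n / e := Nat.div_pos (Nat.le_of_dvd hn hednd) he0
    have hcast : ((n:ℝ)) = ((n / e : ℕ) : ℝ) * e := by exact_mod_cast hde.symm
    have hnen0 : (0:ℝ) < ((n / e : ℕ) : ℝ) := by exact_mod_cast hne0
    have he0' : (0:ℝ) < (e : ℝ) := by exact_mod_cast he0
    have hn0' : (0:ℝ) < (n : ℝ) := by exact_mod_cast hn
    have harg : π * (((n / e) * j : ℕ) : ℝ) / (n:ℝ) = π * j / e := by
      rw [div_eq_div_iff hn0'.ne' he0'.ne', hcast]
      push_cast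
      ring
    rw [harg]

end Aux

theorem prod_Gamma_reg (n : ℕ) (hn : 1 ≤ n) :
    ∏ k ∈ Reg n, Real.Gamma ((k : ℝ) / n) =
      (2 * Real.pi) ^ ((((Reg n).card : ℝ) - 1) / 2) / Real.sqrt (kappa n) := by
  have hn0 : 0 < n := hn
  have hnR : (0:ℝ) < n := by exact_mod_cast hn0
  set P : ℕ → Prop := fun k => Nat.Coprime (Nat.gcd k n) (n / Nat.gcd k n) with hP
  set R' : Finset ℕ := (Finset.Ico 1 n).filter P with hR'
  -- Reg n = insert n R'
  have hnmem : P n := by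
    rw [hP]
    simp only [Nat.gcd_self, Nat.div_self hn0]
    exact Nat.coprime_one_right n
  have hReg : Reg n = insert n R' := by
    rw [Reg, hR']
    have h1 : Finset.Icc 1 n = insert n (Finset.Ico 1 n) := (Finset.Ico_insert_right hn).symm
    rw [h1, Finset.filter_insert]
    rw [if_pos ((regular_iff hn0).mpr hnmem)]
    congr 1
    apply Finset.filter_congr
    intro k hk
    exact ⟨fun h => (regular_iff hn0).mp h, fun h => (regular_iff hn0).mpr h⟩
  have hnnotin : n ∉ R' := by
    rw [hR']
    intro h
    have := (Finset.mem_filter.mp h).1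
    rw [Finset.mem_Ico] at this
    omega
  have hcard : (Reg n).card = R'.card + 1 := by
    rw [hReg, Finset.card_insert_of_notMem hnnotin]
  -- basic facts for k ∈ R'
  have hbnd : ∀ k ∈ R', 0 < k ∧ k < n := by
    intro k hk
    have := (Finset.mem_filter.mp hk).1
    rw [Finset.mem_Ico] at this
    omega
  -- reduce the product to R'
  have hprod : ∏ k ∈ Reg n, Real.Gamma ((k : ℝ) / n) =
      ∏ k ∈ R', Real.Gamma ((k : ℝ) / n) := by
    rw [hReg, Finset.prod_insert hnnotin, div_self hnR.ne', Real.Gamma_one, one_mul]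
  -- symmetry of R' under k ↦ n - k
  have hsymm : ∏ k ∈ R', Real.Gamma (((n - k : ℕ) : ℝ) / n) =
      ∏ k ∈ R', Real.Gamma ((k : ℝ) / n) := by
    apply Finset.prod_nbij' (i := fun k => n - k) (j := fun k => n - k)
    · intro k hk
      obtain ⟨hk1, hkP⟩ := Finset.mem_filter.mp hk
      rw [Finset.mem_Ico] at hk1
      rw [hR', Finset.mem_filter, Finset.mem_Ico]
      refine ⟨⟨by omega, by omega⟩, ?_⟩
      have hg : Nat.gcd (n - k) n = Nat.gcd k n := by
        have h1 : n = k + (n - k) := by omega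
        calc Nat.gcd (n - k) n = Nat.gcd (n - k) (k + (n - k)) := by rw [← h1]
          _ = Nat.gcd (n - k) k := by rw [Nat.gcd_add_self_right]
          _ = Nat.gcd n k := Nat.gcd_sub_self_left (by omega)
          _ = Nat.gcd k n := Nat.gcd_comm n k
      show Nat.Coprime (Nat.gcd (n - k) n) (n / Nat.gcd (n - k) n)
      rw [hg]
      exact hkP
    · intro k hk
      obtain ⟨hk1, hkP⟩ := Finset.mem_filter.mp hk
      rw [Finset.mem_Ico] at hk1
      rw [hR', Finset.mem_filter, Finset.mem_Ico]
      refine ⟨⟨by omega, by omega⟩, ?_⟩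
      have hg : Nat.gcd (n - k) n = Nat.gcd k n := by
        have h1 : n = k + (n - k) := by omega
        calc Nat.gcd (n - k) n = Nat.gcd (n - k) (k + (n - k)) := by rw [← h1]
          _ = Nat.gcd (n - k) k := by rw [Nat.gcd_add_self_right]
          _ = Nat.gcd n k := Nat.gcd_sub_self_left (by omega)
          _ = Nat.gcd k n := Nat.gcd_comm n k
      show Nat.Coprime (Nat.gcd (n - k) n) (n / Nat.gcd (n - k) n)
      rw [hg]
      exact hkP
    · intro k hk
      obtain ⟨hk1, -⟩ := Finset.mem_filter.mp hk
      rw [Finset.mem_Ico] at hk1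
      omega
    · intro k hk
      obtain ⟨hk1, -⟩ := Finset.mem_filter.mp hk
      rw [Finset.mem_Ico] at hk1
      omega
    · intro k hk
      rfl
  -- square of the product
  set S : ℝ := ∏ k ∈ R', Real.Gamma ((k : ℝ) / n) with hS
  have hSpos : 0 < S := by
    apply Finset.prod_pos
    intro k hk
    obtain ⟨h1, h2⟩ := hbnd k hk
    apply Real.Gamma_pos_of_pos
    positivity
  have hsq : S ^ 2 = (2 * π) ^ R'.card / (kappa n : ℝ) := by
    have h1 : S ^ 2 = ∏ k ∈ R', (Real.Gamma ((k : ℝ) / n) *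
        Real.Gamma (((n - k : ℕ) : ℝ) / n)) := by
      rw [Finset.prod_mul_distrib, hsymm, hS]; ring
    have h2 : ∀ k ∈ R', Real.Gamma ((k : ℝ) / n) * Real.Gamma (((n - k : ℕ) : ℝ) / n) =
        (2 * π) / (2 * Real.sin (π * k / n)) := by
      intro k hk
      obtain ⟨hk0, hkn⟩ := hbnd k hk
      have hc : ((n - k : ℕ) : ℝ) / n = 1 - (k : ℝ) / n := by
        rw [Nat.cast_sub hkn.le]
        field_simp
      rw [hc, Real.Gamma_mul_Gamma_one_sub]
      rw [mul_div_assoc (π : ℝ) (k : ℝ) (n : ℝ)]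
      ring_nf
    rw [h1, Finset.prod_congr rfl h2, Finset.prod_div_distrib, Finset.prod_const]
    congr 1
    exact sine_prod n hn0
  -- κ(n) > 0
  have hkpos : (0:ℝ) < (kappa n : ℝ) := by
    have : 0 < kappa n := by
      rw [kappa]
      apply Finset.prod_pos
      intro p hp
      exact (Nat.prime_of_mem_primeFactors hp).pos
    exact_mod_cast this
  -- the right-hand side
  set T : ℝ := (2 * Real.pi) ^ ((((Reg n).card : ℝ) - 1) / 2) / Real.sqrt (kappa n) with hT
  have hTpos : 0 < T := by
    rw [hT]
    apply div_pos
    · exact Real.rpow_pos_of_pos (by positivity) _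
    · exact Real.sqrt_pos.mpr hkpos
  have hTsq : T ^ 2 = (2 * π) ^ R'.card / (kappa n : ℝ) := by
    rw [hT, div_pow, Real.sq_sqrt hkpos.le]
    congr 1
    have hexp : (((Reg n).card : ℝ) - 1) / 2 = (R'.card : ℝ) / 2 := by
      rw [hcard]
      push_cast
      ring
    rw [hexp]
    rw [← Real.rpow_natCast (2 * π) R'.card]
    rw [sq, ← Real.rpow_add (by positivity)]
    congr 1
    ring
  -- conclude
  rw [hprod]
  have : S ^ 2 = T ^ 2 := by rw [hsq, hTsq]
  nlinarith [hSpos, hTpos, this]
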